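/- Let H = (V_H, E_H) be a connected subgraph of G and let uv ∈ E_H. Suppose (i) the minimum of ⟨θ, y⟩ over all incidence vectors y of multicuts of H equals 0, and (ii) for every U ⊂ V_H with u ∈ U and v ∉ U it holds that Σ_{e ∈ δ(U, V_H \ U)} θ_e ≥ Σ_{e ∈ δ(V_H) ∩ E⁺} θ_e. Then there exists an optimal solution x* of the multicut problem min_{x ∈ MC(G)} ⟨θ, x⟩ with x*_{uv} = 0. -/

import Mathlib

set_option linter.unusedSectionVars false
set_option linter.unreachableTactic false
set_option linter.unusedTactic false
set_option linter.unnecessarySeqFocus false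
set_option linter.unusedVariables false


variable {V : Type} [Fintype V] [DecidableEq V]

/-- The set of edges of `G` with one endpoint in `U` and the other in `W` (δ(U, W)). -/
def btw (G : SimpleGraph V) [DecidableRel G.Adj] (U W : Finset V) : Finset (Sym2 V) :=
  G.edgeFinset.filter fun e => ∃ x ∈ U, ∃ y ∈ W, e = s(x, y)

/-- The cut δ(U) := δ(U, V \ U). -/
def cutδ (G : SimpleGraph V) [DecidableRel G.Adj] (U : Finset V) : Finset (Sym2 V) :=
  btw G U Uᶜ

/-- `M` is (the edge set of) a multicut of `G`. -/
def IsMulticut (G : SimpleGraph V) [DecidableRel G.Adj] (M : Finset (Sym2 V)) : Prop :=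
  M ⊆ G.edgeFinset ∧ ∃ f : V → V, ∀ x y, G.Adj x y → (s(x, y) ∈ M ↔ f x ≠ f y)

/-- `M` is (the edge set of) a multicut of the subgraph with edge set `EH`. -/
def IsMulticutOn (EH : Finset (Sym2 V)) (M : Finset (Sym2 V)) : Prop :=
  M ⊆ EH ∧ ∃ f : V → V, ∀ x y, s(x, y) ∈ EH → (s(x, y) ∈ M ↔ f x ≠ f y)

/-- The subgraph `(VH, EH)` is connected. -/
def ConnOn (VH : Finset V) (EH : Finset (Sym2 V)) : Prop :=
  VH.Nonempty ∧ ∀ a ∈ VH, ∀ b ∈ VH, Relation.ReflTransGen (fun x y => s(x, y) ∈ EH) a b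

def mcut (G : SimpleGraph V) [DecidableRel G.Adj] (h : V → V) : Finset (Sym2 V) :=
  G.edgeFinset.filter fun e => ¬ (e.map h).IsDiag

lemma mcut_multicut (G : SimpleGraph V) [DecidableRel G.Adj] (h : V → V) :
    IsMulticut G (mcut G h) := by
  refine ⟨Finset.filter_subset _ _, h, fun x y hxy => ?_⟩
  simp [mcut, Finset.mem_filter, SimpleGraph.mem_edgeFinset, hxy, Sym2.map_pair_eq,
    Sym2.mk_isDiag_iff]

lemma multicut_eq_mcut (G : SimpleGraph V) [DecidableRel G.Adj] (N : Finset (Sym2 V))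
    (hN : IsMulticut G N) : ∃ h : V → V, N = mcut G h := by
  obtain ⟨hsub, f, hf⟩ := hN
  refine ⟨f, ?_⟩
  ext e
  induction e using Sym2.ind with
  | _ x y =>
    simp only [mcut, Finset.mem_filter]
    constructor
    · intro hmem
      have he : s(x, y) ∈ G.edgeFinset := hsub hmem
      have hadj : G.Adj x y := by simpa [SimpleGraph.mem_edgeFinset] using he
      refine ⟨he, ?_⟩
      rw [Sym2.map_pair_eq, Sym2.mk_isDiag_iff]
      exact (hf x y hadj).1 hmem
    · rintro ⟨he, hnd⟩
      have hadj : G.Adj x y := by simpa [SimpleGraph.mem_edgeFinset] using he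
      rw [Sym2.map_pair_eq, Sym2.mk_isDiag_iff] at hnd
      exact (hf x y hadj).2 hnd

lemma fpoint (t : ℝ) (α β a p q : V) (hαβ : α ≠ β) (haα : a ≠ α) (haβ : a ≠ β) :
    (((if ¬ (s((if p = a then α else p), (if q = a then α else q)) : Sym2 V).IsDiag then t else 0) +
      (if (s((if p = a then α else p), (if q = a then α else q)) : Sym2 V) = s(α, β) then t else 0)) +
     ((if ¬ (s((if p = a then β else p), (if q = a then β else q)) : Sym2 V).IsDiag then t else 0) +
      (if (s((if p = a then β else p), (if q = a then β else q)) : Sym2 V) = s(α, β) then t else 0)))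
    = 2 * ((if ¬ (s(p, q) : Sym2 V).IsDiag then t else 0) +
      (if (s(p, q) : Sym2 V) = s(α, β) then t else 0)) := by
  by_cases hpa : p = a <;> by_cases hqa : q = a <;>
    simp only [hpa, hqa, if_pos, if_neg, Sym2.mk_isDiag_iff, Sym2.eq_iff] <;>
    simp_all <;>
    by_cases hpq : p = q <;> by_cases hpα : p = α <;> by_cases hpβ : p = β <;>
    by_cases hqα : q = α <;> by_cases hqβ : q = β <;> simp_all [eq_comm] <;> ring


lemma keyA (G : SimpleGraph V) [DecidableRel G.Adj] (θ : Sym2 V → ℝ) (VH : Finset V)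
    (u v : V) (hu : u ∈ VH) (hv : v ∈ VH) (P : ℝ)
    (hcrit : ∀ U : Finset V, U ⊂ VH → u ∈ U → v ∉ U → P ≤ ∑ e ∈ _root_.btw G U (VH \ U), θ e)
    (L : Finset V) :
    ∀ h : V → V, h u ≠ h v → h u ∉ L → h v ∉ L →
      (∀ w ∈ VH, h w = h u ∨ h w = h v ∨ h w ∈ L) →
      2 * P ≤ ∑ e ∈ G.edgeFinset.filter (· ∈ VH.sym2),
        ((if ¬ (e.map h).IsDiag then θ e else 0) + (if e.map h = s(h u, h v) then θ e else 0)) := by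
  induction L using Finset.strongInduction with
  | _ L IH =>
    intro h hne huL hvL hlab
    rcases L.eq_empty_or_nonempty with rfl | ⟨a, haL⟩
    · -- base case: all labels on VH are h u or h v
      have hlab' : ∀ w ∈ VH, h w = h u ∨ h w = h v := by
        intro w hw; rcases hlab w hw with h' | h' | h' <;> simp_all
      have huU : u ∈ VH.filter (fun w => h w = h u) := Finset.mem_filter.mpr ⟨hu, rfl⟩
      have hvU : v ∉ VH.filter (fun w => h w = h u) :=
        fun hvm => hne ((Finset.mem_filter.mp hvm).2).symm
      have hUss : VH.filter (fun w => h w = h u) ⊂ VH :=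
        ⟨Finset.filter_subset _ _, fun hsup => hvU (hsup hv)⟩
      have hP := hcrit _ hUss huU hvU
      have hset : _root_.btw G (VH.filter (fun w => h w = h u))
            (VH \ VH.filter (fun w => h w = h u)) =
          (G.edgeFinset.filter (· ∈ VH.sym2)).filter (fun e => ¬ (e.map h).IsDiag) := by
        ext e
        induction e using Sym2.ind with
        | _ x y =>
          simp only [_root_.btw, Finset.mem_filter, Finset.mem_sdiff, Finset.mk_mem_sym2_iff,
            Sym2.map_pair_eq, Sym2.mk_isDiag_iff, Sym2.eq_iff]
          constructor
          · rintro ⟨he, x', ⟨⟨hx'VH, hx'lab⟩, y', ⟨⟨hy'VH, hy'nU⟩, heq⟩⟩⟩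
            have hy'lab : ¬ h y' = h u := fun hc => hy'nU ⟨hy'VH, hc⟩
            rcases heq with ⟨rfl, rfl⟩ | ⟨rfl, rfl⟩
            · refine ⟨⟨he, hx'VH, hy'VH⟩, ?_⟩
              rw [hx'lab]; exact fun hc => hy'lab hc.symm
            · refine ⟨⟨he, hy'VH, hx'VH⟩, ?_⟩
              rw [hx'lab]; exact fun hc => hy'lab hc
          · rintro ⟨⟨he, hxVH, hyVH⟩, hcut⟩
            refine ⟨he, ?_⟩
            rcases hlab' x hxVH with hx | hx
            · have hy : ¬ h y = h u := by rw [hx] at hcut; exact fun hc => hcut hc.symm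
              exact ⟨x, ⟨⟨hxVH, hx⟩, y, ⟨⟨hyVH, fun hm => hy hm.2⟩, Or.inl ⟨rfl, rfl⟩⟩⟩⟩
            · rcases hlab' y hyVH with hy | hy
              · refine ⟨y, ⟨⟨hyVH, hy⟩, x, ⟨⟨hxVH, fun hm => ?_⟩, Or.inr ⟨rfl, rfl⟩⟩⟩⟩
                have := hm.2
                rw [hx] at this
                exact hne this.symm
              · rw [hx, hy] at hcut; exact absurd rfl hcut
      have hpt : ∀ e ∈ G.edgeFinset.filter (· ∈ VH.sym2),
          (if e.map h = s(h u, h v) then θ e else 0) = (if ¬ (e.map h).IsDiag then θ e else 0) := by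
        intro e hemem
        have hsym : e ∈ VH.sym2 := (Finset.mem_filter.mp hemem).2
        induction e using Sym2.ind with
        | _ x y =>
          rw [Finset.mk_mem_sym2_iff] at hsym
          rcases hlab' x hsym.1 with hx | hx <;> rcases hlab' y hsym.2 with hy | hy <;>
            simp [Sym2.map_pair_eq, Sym2.mk_isDiag_iff, Sym2.eq_iff, hx, hy, hne, hne.symm]
      have e1 : ∑ e ∈ G.edgeFinset.filter (· ∈ VH.sym2), (if ¬ (e.map h).IsDiag then θ e else 0)
          = ∑ e ∈ _root_.btw G (VH.filter (fun w => h w = h u))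
              (VH \ VH.filter (fun w => h w = h u)), θ e := by
        rw [hset]; exact (Finset.sum_filter _ _).symm
      have hsplit : ∑ e ∈ G.edgeFinset.filter (· ∈ VH.sym2),
          ((if ¬ (e.map h).IsDiag then θ e else 0) + (if e.map h = s(h u, h v) then θ e else 0))
          = 2 * ∑ e ∈ _root_.btw G (VH.filter (fun w => h w = h u))
              (VH \ VH.filter (fun w => h w = h u)), θ e := by
        rw [Finset.sum_add_distrib, Finset.sum_congr rfl hpt, e1]; ring
      rw [hsplit]
      linarith
    · -- inductive step: merge label a into h u resp. h v
      have hau : h u ≠ a := fun e => huL (by rw [e]; exact haL)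
      have hav : h v ≠ a := fun e => hvL (by rw [e]; exact haL)
      have h1u : (fun w => if h w = a then h u else h w) u = h u := by simp [hau]
      have h1v : (fun w => if h w = a then h u else h w) v = h v := by simp [hav]
      have h2u : (fun w => if h w = a then h v else h w) u = h u := by simp [hau]
      have h2v : (fun w => if h w = a then h v else h w) v = h v := by simp [hav]
      have hIH1 := IH (L.erase a) (Finset.erase_ssubset haL)
        (fun w => if h w = a then h u else h w)
        (by rw [if_neg hau, if_neg hav]; exact hne)
        (by rw [if_neg hau]; exact fun hx => huL (Finset.mem_of_mem_erase hx))
        (by rw [if_neg hav]; exact fun hx => hvL (Finset.mem_of_mem_erase hx))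
        (by
          intro w hw
          rw [if_neg hau, if_neg hav]
          rcases hlab w hw with h' | h' | h'
          · left; simp [h', hau]
          · right; left; simp [h', hav]
          · by_cases hwa : h w = a
            · left; simp [hwa]
            · right; right
              simp only [hwa, if_false]
              exact Finset.mem_erase.mpr ⟨hwa, h'⟩)
      have hIH2 := IH (L.erase a) (Finset.erase_ssubset haL)
        (fun w => if h w = a then h v else h w)
        (by rw [if_neg hau, if_neg hav]; exact hne)
        (by rw [if_neg hau]; exact fun hx => huL (Finset.mem_of_mem_erase hx))
        (by rw [if_neg hav]; exact fun hx => hvL (Finset.mem_of_mem_erase hx))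
        (by
          intro w hw
          rw [if_neg hau, if_neg hav]
          rcases hlab w hw with h' | h' | h'
          · left; simp [h', hau]
          · right; left; simp [h', hav]
          · by_cases hwa : h w = a
            · right; left; simp [hwa]
            · right; right
              simp only [hwa, if_false]
              exact Finset.mem_erase.mpr ⟨hwa, h'⟩)
      rw [if_neg hau, if_neg hav] at hIH1
      rw [if_neg hau, if_neg hav] at hIH2
      have hsum : (∑ e ∈ G.edgeFinset.filter (· ∈ VH.sym2),
            ((if ¬ (e.map (fun w => if h w = a then h u else h w)).IsDiag then θ e else 0) +
             (if e.map (fun w => if h w = a then h u else h w) = s(h u, h v) then θ e else 0))) +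
          (∑ e ∈ G.edgeFinset.filter (· ∈ VH.sym2),
            ((if ¬ (e.map (fun w => if h w = a then h v else h w)).IsDiag then θ e else 0) +
             (if e.map (fun w => if h w = a then h v else h w) = s(h u, h v) then θ e else 0)))
          = 2 * ∑ e ∈ G.edgeFinset.filter (· ∈ VH.sym2),
            ((if ¬ (e.map h).IsDiag then θ e else 0) + (if e.map h = s(h u, h v) then θ e else 0)) := by
        rw [← Finset.sum_add_distrib, Finset.mul_sum]
        refine Finset.sum_congr rfl fun e _ => ?_
        induction e using Sym2.ind with
        | _ x y =>
          simp only [Sym2.map_pair_eq]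
          exact fpoint (θ s(x, y)) (h u) (h v) a (h x) (h y) hne hau.symm hav.symm
      linarith

lemma S_eq (G : SimpleGraph V) [DecidableRel G.Adj] (θ : Sym2 V → ℝ) (h : V → V) :
    ∑ e ∈ mcut G h, θ e = ∑ e ∈ G.edgeFinset, (if ¬ (e.map h).IsDiag then θ e else 0) :=
  Finset.sum_filter _ _

lemma bnd_eq (G : SimpleGraph V) [DecidableRel G.Adj] (VH : Finset V) :
    cutδ G VH = G.edgeFinset.filter (fun e => e ∉ VH.sym2 ∧ e ∉ VHᶜ.sym2) := by
  ext e
  induction e using Sym2.ind with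
  | _ x y =>
    simp only [cutδ, _root_.btw, Finset.mem_filter, Finset.mem_compl, Finset.mk_mem_sym2_iff,
      Sym2.eq_iff]
    constructor
    · rintro ⟨he, x', hx'VH, y', hy'VH, heq⟩
      rcases heq with ⟨rfl, rfl⟩ | ⟨rfl, rfl⟩
      · exact ⟨he, fun hc => hy'VH hc.2, fun hc => hc.1 hx'VH⟩
      · exact ⟨he, fun hc => hy'VH hc.1, fun hc => hc.2 hx'VH⟩
    · rintro ⟨he, hns, hnc⟩
      by_cases hx : x ∈ VH
      · have hy : y ∉ VH := fun hy => hns ⟨hx, hy⟩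
        exact ⟨he, x, hx, y, hy, Or.inl ⟨rfl, rfl⟩⟩
      · have hy : y ∈ VH := by
          by_contra hy
          exact hnc ⟨hx, hy⟩
        exact ⟨he, y, hy, x, hx, Or.inr ⟨rfl, rfl⟩⟩

lemma NBbound (θ : Sym2 V → ℝ) (s t : Finset (Sym2 V)) (hsub : s ⊆ t) :
    ∑ e ∈ s, θ e ≤ ∑ e ∈ t.filter (fun e => 0 ≤ θ e), θ e := by
  have h1 : ∑ e ∈ s, θ e ≤ ∑ e ∈ s.filter (fun e => 0 ≤ θ e), θ e := by
    rw [← Finset.sum_filter_add_sum_filter_not s (fun e => 0 ≤ θ e)]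
    have : ∑ e ∈ s.filter (fun e => ¬ 0 ≤ θ e), θ e ≤ 0 :=
      Finset.sum_nonpos fun e hem => le_of_not_ge (Finset.mem_filter.mp hem).2
    linarith
  refine h1.trans (Finset.sum_le_sum_of_subset_of_nonneg ?_ ?_)
  · exact Finset.filter_subset_filter _ hsub
  · exact fun e hmem _ => (Finset.mem_filter.mp hmem).2

lemma E1 (G : SimpleGraph V) [DecidableRel G.Adj] (θ : Sym2 V → ℝ) (VH : Finset V)
    (f : V → V) (c₁ : V) (hc₁ : ∀ z, z ∉ VH → f z ≠ c₁) :
    (∑ e ∈ mcut G (fun w => if w ∈ VH then c₁ else f w), θ e)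
      + ∑ e ∈ G.edgeFinset.filter (fun e => e ∈ VH.sym2 ∧ ¬ (e.map f).IsDiag), θ e
    = (∑ e ∈ mcut G f, θ e)
      + ∑ e ∈ G.edgeFinset.filter
          (fun e => (e ∉ VH.sym2 ∧ e ∉ VHᶜ.sym2) ∧ (e.map f).IsDiag), θ e := by
  rw [S_eq, S_eq, Finset.sum_filter, Finset.sum_filter, ← Finset.sum_add_distrib,
    ← Finset.sum_add_distrib]
  refine Finset.sum_congr rfl fun e he => ?_
  induction e using Sym2.ind with
  | _ x y =>
    by_cases hx : x ∈ VH <;> by_cases hy : y ∈ VH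
    · simp [Sym2.map_pair_eq, Sym2.mk_isDiag_iff, Finset.mk_mem_sym2_iff, Finset.mem_compl,
        hx, hy]
    · have hyc : f y ≠ c₁ := hc₁ y hy
      by_cases hfd : f x = f y <;>
        simp [Sym2.map_pair_eq, Sym2.mk_isDiag_iff, Finset.mk_mem_sym2_iff, Finset.mem_compl,
          hx, hy, hfd, hyc.symm]
    · have hxc : f x ≠ c₁ := hc₁ x hx
      by_cases hfd : f x = f y
      · have hyc : f y ≠ c₁ := hfd ▸ hxc
        simp [Sym2.map_pair_eq, Sym2.mk_isDiag_iff, Finset.mk_mem_sym2_iff, Finset.mem_compl,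
          hx, hy, hfd, hyc]
      · simp [Sym2.map_pair_eq, Sym2.mk_isDiag_iff, Finset.mk_mem_sym2_iff, Finset.mem_compl,
          hx, hy, hfd, hxc]
    · simp [Sym2.map_pair_eq, Sym2.mk_isDiag_iff, Finset.mk_mem_sym2_iff, Finset.mem_compl,
        hx, hy]



lemma E2 (G : SimpleGraph V) [DecidableRel G.Adj] (θ : Sym2 V → ℝ) (VH : Finset V)
    (u v : V) (f : V → V) (hfd : f u ≠ f v) (c₂ : V)
    (hc₂ : ∀ z, ¬ (z ∈ VH ∧ (f z = f u ∨ f z = f v)) → f z ≠ c₂) :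
    (∑ e ∈ mcut G (fun w => if w ∈ VH ∧ (f w = f u ∨ f w = f v) then c₂ else f w), θ e)
      + ∑ e ∈ G.edgeFinset.filter (fun e => e ∈ VH.sym2 ∧ e.map f = s(f u, f v)), θ e
    = (∑ e ∈ mcut G f, θ e)
      + ∑ e ∈ G.edgeFinset.filter
          (fun e => (e ∉ VH.sym2 ∧ e ∉ VHᶜ.sym2) ∧
            (e.map f = s(f u, f u) ∨ e.map f = s(f v, f v))), θ e := by
  rw [S_eq, S_eq, Finset.sum_filter, Finset.sum_filter, ← Finset.sum_add_distrib,
    ← Finset.sum_add_distrib]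
  refine Finset.sum_congr rfl fun e he => ?_
  induction e using Sym2.ind with
  | _ x y =>
    by_cases hQx : x ∈ VH ∧ (f x = f u ∨ f x = f v) <;>
      by_cases hQy : y ∈ VH ∧ (f y = f u ∨ f y = f v)
    · -- both in Q
      rcases hQx.2 with hfx | hfx <;> rcases hQy.2 with hfy | hfy <;>
        simp [Sym2.map_pair_eq, Sym2.mk_isDiag_iff, Finset.mk_mem_sym2_iff, Finset.mem_compl,
          hQx, hQy, hQx.1, hQy.1, hfx, hfy, Sym2.eq_iff, hfd, hfd.symm]
    · -- x in Q, y not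
      have hyc : f y ≠ c₂ := hc₂ y hQy
      by_cases hyVH : y ∈ VH
      · have hfy : ¬ (f y = f u ∨ f y = f v) := fun hc => hQy ⟨hyVH, hc⟩
        have hcut : f x ≠ f y := by
          rcases hQx.2 with hfx | hfx <;> intro hc <;> exact hfy (by rw [← hc, hfx]; simp)
        have hT : ¬ (f x = f u ∧ f y = f v ∨ f x = f v ∧ f y = f u) := by tauto
        simp [Sym2.map_pair_eq, Sym2.mk_isDiag_iff, Finset.mk_mem_sym2_iff, Finset.mem_compl,
          hQx, hQy, hQx.1, hyVH, hcut, hyc.symm, Sym2.eq_iff, hfy, hT] <;> (try split_ifs) <;> tauto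
      · by_cases hxy : f x = f y
        · have hD : (f x = f u ∧ f y = f u ∨ f x = f v ∧ f y = f v) := by
            rcases hQx.2 with hfx | hfx
            · exact Or.inl ⟨hfx, hxy ▸ hfx⟩
            · exact Or.inr ⟨hfx, hxy ▸ hfx⟩
          simp [Sym2.map_pair_eq, Sym2.mk_isDiag_iff, Finset.mk_mem_sym2_iff, Finset.mem_compl,
            hQx, hQy, hQx.1, hyVH, hxy, hyc.symm, Sym2.eq_iff, hD] <;> (try split_ifs) <;> tauto
        · have hT : ¬ (f x = f u ∧ f y = f u ∨ f x = f v ∧ f y = f v) := by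
            rintro (⟨h1, h2⟩ | ⟨h1, h2⟩) <;> exact hxy (h1.trans h2.symm)
          simp [Sym2.map_pair_eq, Sym2.mk_isDiag_iff, Finset.mk_mem_sym2_iff, Finset.mem_compl,
            hQx, hQy, hQx.1, hyVH, hxy, hyc.symm, Sym2.eq_iff, hT] <;> (try split_ifs) <;> tauto
    · -- y in Q, x not
      have hxc : f x ≠ c₂ := hc₂ x hQx
      by_cases hxVH : x ∈ VH
      · have hfx : ¬ (f x = f u ∨ f x = f v) := fun hc => hQx ⟨hxVH, hc⟩
        have hcut : f x ≠ f y := by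
          rcases hQy.2 with hfy | hfy <;> intro hc <;> exact hfx (by rw [hc, hfy]; simp)
        have hT : ¬ (f x = f u ∧ f y = f v ∨ f x = f v ∧ f y = f u) := by tauto
        simp [Sym2.map_pair_eq, Sym2.mk_isDiag_iff, Finset.mk_mem_sym2_iff, Finset.mem_compl,
          hQx, hQy, hQy.1, hxVH, hcut, hxc, Sym2.eq_iff, hfx, hT] <;> (try split_ifs) <;> tauto
      · by_cases hxy : f x = f y
        · have hyc2 : f y ≠ c₂ := hxy ▸ hxc
          have hD : (f x = f u ∧ f y = f u ∨ f x = f v ∧ f y = f v) := by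
            rcases hQy.2 with hfy | hfy
            · exact Or.inl ⟨hxy ▸ hfy, hfy⟩
            · exact Or.inr ⟨hxy ▸ hfy, hfy⟩
          simp [Sym2.map_pair_eq, Sym2.mk_isDiag_iff, Finset.mk_mem_sym2_iff, Finset.mem_compl,
            hQx, hQy, hQy.1, hxVH, hxy, hxc, hyc2.symm, Sym2.eq_iff, hD] <;> (try split_ifs) <;> tauto
        · have hT : ¬ (f x = f u ∧ f y = f u ∨ f x = f v ∧ f y = f v) := by
            rintro (⟨h1, h2⟩ | ⟨h1, h2⟩) <;> exact hxy (h1.trans h2.symm)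
          simp [Sym2.map_pair_eq, Sym2.mk_isDiag_iff, Finset.mk_mem_sym2_iff, Finset.mem_compl,
            hQx, hQy, hQy.1, hxVH, hxy, hxc, Sym2.eq_iff, hT] <;> (try split_ifs) <;> tauto
    · -- neither in Q
      by_cases hxVH : x ∈ VH <;> by_cases hyVH : y ∈ VH
      · have hfx : ¬ (f x = f u ∨ f x = f v) := fun hc => hQx ⟨hxVH, hc⟩
        have hfy : ¬ (f y = f u ∨ f y = f v) := fun hc => hQy ⟨hyVH, hc⟩
        have hTu : ¬ (f x = f u ∧ f y = f v ∨ f x = f v ∧ f y = f u) := by tauto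
        simp [Sym2.map_pair_eq, Sym2.mk_isDiag_iff, Finset.mk_mem_sym2_iff, Finset.mem_compl,
          hQx, hQy, hxVH, hyVH, Sym2.eq_iff, hfx, hfy, hTu] <;> (try split_ifs) <;> tauto
      · have hfx : ¬ (f x = f u ∨ f x = f v) := fun hc => hQx ⟨hxVH, hc⟩
        have hT : ¬ (f x = f u ∧ f y = f u ∨ f x = f v ∧ f y = f v) := by tauto
        simp [Sym2.map_pair_eq, Sym2.mk_isDiag_iff, Finset.mk_mem_sym2_iff, Finset.mem_compl,
          hQx, hQy, hxVH, hyVH, Sym2.eq_iff, hfx, hT] <;> (try split_ifs) <;> tauto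
      · have hfy : ¬ (f y = f u ∨ f y = f v) := fun hc => hQy ⟨hyVH, hc⟩
        have hT : ¬ (f x = f u ∧ f y = f u ∨ f x = f v ∧ f y = f v) := by tauto
        simp [Sym2.map_pair_eq, Sym2.mk_isDiag_iff, Finset.mk_mem_sym2_iff, Finset.mem_compl,
          hQx, hQy, hxVH, hyVH, Sym2.eq_iff, hfy, hT] <;> (try split_ifs) <;> tauto
      · simp [Sym2.map_pair_eq, Sym2.mk_isDiag_iff, Finset.mk_mem_sym2_iff, Finset.mem_compl,
          hQx, hQy, hxVH, hyVH, Sym2.eq_iff] <;> (try split_ifs) <;> tauto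

theorem stmt_9_aux (G : SimpleGraph V) [DecidableRel G.Adj] (θ : Sym2 V → ℝ)
    (VH : Finset V) (EH : Finset (Sym2 V))
    (hEHsub : EH ⊆ G.edgeFinset)
    (hEHverts : ∀ e ∈ EH, ∀ x ∈ e, x ∈ VH)
    (u v : V) (huv : s(u, v) ∈ EH)
    (hcrit : ∀ U : Finset V, U ⊂ VH → u ∈ U → v ∉ U →
      ∑ e ∈ (cutδ G VH).filter (fun e => 0 ≤ θ e), θ e ≤ ∑ e ∈ _root_.btw G U (VH \ U), θ e) :
    ∃ M, IsMulticut G M ∧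
      (∀ N, IsMulticut G N → ∑ e ∈ M, θ e ≤ ∑ e ∈ N, θ e) ∧ s(u, v) ∉ M := by
  have huVH : u ∈ VH := hEHverts _ huv u (by simp)
  have hvVH : v ∈ VH := hEHverts _ huv v (by simp)
  obtain ⟨f, -, hfmin⟩ := Finset.exists_min_image (Finset.univ : Finset (V → V))
      (fun h => ∑ e ∈ mcut G h, θ e) ⟨fun _ => u, Finset.mem_univ _⟩
  have hopt : ∀ N, IsMulticut G N → ∑ e ∈ mcut G f, θ e ≤ ∑ e ∈ N, θ e := by
    intro N hN
    obtain ⟨g, rfl⟩ := multicut_eq_mcut G N hN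
    exact hfmin g (Finset.mem_univ g)
  by_cases hfd : f u = f v
  · refine ⟨mcut G f, mcut_multicut G f, hopt, ?_⟩
    simp [mcut, Sym2.map_pair_eq, Sym2.mk_isDiag_iff, hfd]
  · -- fresh label c₁ for merging all of VH
    have hfresh1 : ∃ c, c ∉ VHᶜ.image f := by
      have h3 : VHᶜ.card < Fintype.card V := by
        have hss : VHᶜ ⊂ Finset.univ := Finset.ssubset_univ_iff.mpr (fun hcc => by
          have huc : u ∈ VHᶜ := hcc ▸ Finset.mem_univ u
          rw [Finset.mem_compl] at huc
          exact huc huVH)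
        simpa using Finset.card_lt_card hss
      by_contra hc
      push_neg at hc
      have heq := Finset.eq_univ_iff_forall.mpr hc
      have h4 : (VHᶜ.image f).card ≤ VHᶜ.card := Finset.card_image_le
      rw [heq, Finset.card_univ] at h4
      omega
    obtain ⟨c₁, hc₁mem⟩ := hfresh1
    have hc₁ : ∀ z, z ∉ VH → f z ≠ c₁ := fun z hz hez =>
      hc₁mem (Finset.mem_image.mpr ⟨z, Finset.mem_compl.mpr hz, hez⟩)
    -- fresh label c₂ for merging the u- and v-blocks inside VH
    have hfresh2 : ∃ c, c ∉ (Finset.univ.filter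
        (fun w => ¬ (w ∈ VH ∧ (f w = f u ∨ f w = f v)))).image f := by
      have h3 : (Finset.univ.filter
          (fun w => ¬ (w ∈ VH ∧ (f w = f u ∨ f w = f v)))).card < Fintype.card V := by
        have hss : (Finset.univ.filter
            (fun w => ¬ (w ∈ VH ∧ (f w = f u ∨ f w = f v)))) ⊂ Finset.univ := by
          rw [Finset.ssubset_univ_iff]
          intro hcc
          have humem : u ∈ Finset.univ.filter
              (fun w => ¬ (w ∈ VH ∧ (f w = f u ∨ f w = f v))) := by
            rw [hcc]; exact Finset.mem_univ u
          exact (Finset.mem_filter.mp humem).2 ⟨huVH, Or.inl rfl⟩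
        simpa using Finset.card_lt_card hss
      by_contra hc
      rw [not_exists] at hc
      have heq := Finset.eq_univ_iff_forall.mpr (fun c => not_not.mp (hc c))
      have h4 := Finset.card_image_le (s := Finset.univ.filter
        (fun w => ¬ (w ∈ VH ∧ (f w = f u ∨ f w = f v)))) (f := f)
      rw [heq, Finset.card_univ] at h4
      omega
    obtain ⟨c₂, hc₂mem⟩ := hfresh2
    have hc₂ : ∀ z, ¬ (z ∈ VH ∧ (f z = f u ∨ f z = f v)) → f z ≠ c₂ := fun z hz hez =>
      hc₂mem (Finset.mem_image.mpr ⟨z, Finset.mem_filter.mpr ⟨Finset.mem_univ z, hz⟩, hez⟩)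
    -- key averaging inequality
    have hkey := keyA G θ VH u v huVH hvVH
      (∑ e ∈ (cutδ G VH).filter (fun e => 0 ≤ θ e), θ e) hcrit
      ((VH.image f) \ {f u, f v}) f hfd (by simp) (by simp)
      (by
        intro w hw
        by_cases h1 : f w = f u
        · exact Or.inl h1
        · by_cases h2 : f w = f v
          · exact Or.inr (Or.inl h2)
          · exact Or.inr (Or.inr (Finset.mem_sdiff.mpr
              ⟨Finset.mem_image.mpr ⟨w, hw, rfl⟩, by simp [h1, h2]⟩)))
    have hsplitsum : ∑ e ∈ G.edgeFinset.filter (· ∈ VH.sym2),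
        ((if ¬ (e.map f).IsDiag then θ e else 0) + (if e.map f = s(f u, f v) then θ e else 0))
        = (∑ e ∈ G.edgeFinset.filter (fun e => e ∈ VH.sym2 ∧ ¬ (e.map f).IsDiag), θ e)
          + ∑ e ∈ G.edgeFinset.filter (fun e => e ∈ VH.sym2 ∧ e.map f = s(f u, f v)), θ e := by
      rw [Finset.sum_add_distrib]
      congr 1 <;> rw [← Finset.sum_filter, Finset.filter_filter]
    rw [hsplitsum] at hkey
    -- boundary bounds
    have hB1 : ∑ e ∈ G.edgeFinset.filter
          (fun e => (e ∉ VH.sym2 ∧ e ∉ VHᶜ.sym2) ∧ (e.map f).IsDiag), θ e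
        ≤ ∑ e ∈ (cutδ G VH).filter (fun e => 0 ≤ θ e), θ e := by
      refine NBbound θ _ _ ?_
      rw [bnd_eq]
      intro e hmem
      rw [Finset.mem_filter] at hmem ⊢
      exact ⟨hmem.1, hmem.2.1⟩
    have hB2 : ∑ e ∈ G.edgeFinset.filter
          (fun e => (e ∉ VH.sym2 ∧ e ∉ VHᶜ.sym2) ∧
            (e.map f = s(f u, f u) ∨ e.map f = s(f v, f v))), θ e
        ≤ ∑ e ∈ (cutδ G VH).filter (fun e => 0 ≤ θ e), θ e := by
      refine NBbound θ _ _ ?_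
      rw [bnd_eq]
      intro e hmem
      rw [Finset.mem_filter] at hmem ⊢
      exact ⟨hmem.1, hmem.2.1⟩
    have hE1' := E1 G θ VH f c₁ hc₁
    have hE2' := E2 G θ VH u v f hfd c₂ hc₂
    have hg2 : ∑ e ∈ mcut G f, θ e ≤
        ∑ e ∈ mcut G (fun w => if w ∈ VH ∧ (f w = f u ∨ f w = f v) then c₂ else f w), θ e :=
      hfmin _ (Finset.mem_univ _)
    have hg1le : ∑ e ∈ mcut G (fun w => if w ∈ VH then c₁ else f w), θ e
        ≤ ∑ e ∈ mcut G f, θ e := by linarith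
    refine ⟨mcut G (fun w => if w ∈ VH then c₁ else f w), mcut_multicut _ _,
      fun N hN => le_trans hg1le (hopt N hN), ?_⟩
    simp [mcut, Sym2.map_pair_eq, Sym2.mk_isDiag_iff, huVH, hvVH]

/-- multicut subgraph criterion (Theorem: Multicut Subgraph Criterion). -/
theorem stmt_9 (G : SimpleGraph V) [DecidableRel G.Adj] (θ : Sym2 V → ℝ)
    (VH : Finset V) (EH : Finset (Sym2 V))
    (hEHsub : EH ⊆ G.edgeFinset)
    (hEHverts : ∀ e ∈ EH, ∀ x ∈ e, x ∈ VH)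
    (hconn : ConnOn VH EH)
    (u v : V) (huv : s(u, v) ∈ EH)
    (htriv_lb : ∀ M, IsMulticutOn EH M → 0 ≤ ∑ e ∈ M, θ e)
    (htriv_eq : ∃ M, IsMulticutOn EH M ∧ ∑ e ∈ M, θ e = 0)
    (hcrit : ∀ U : Finset V, U ⊂ VH → u ∈ U → v ∉ U →
      ∑ e ∈ (cutδ G VH).filter (fun e => 0 ≤ θ e), θ e ≤ ∑ e ∈ btw G U (VH \ U), θ e) :
    ∃ M, IsMulticut G M ∧
      (∀ N, IsMulticut G N → ∑ e ∈ M, θ e ≤ ∑ e ∈ N, θ e) ∧ s(u, v) ∉ M := by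
  exact stmt_9_aux G θ VH EH hEHsub hEHverts u v huv hcrit
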